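/- Let f : ℝⁿ → ℝ be continuously differentiable, T > 0, x₀ ∈ ℝⁿ, and let Π : [0,T] → ℝ^{n×n} be a continuous map such that Π(t) is a symmetric idempotent matrix (an orthogonal projection) for each t. Let x : [0,T] → ℝⁿ be continuously differentiable and u : [0,T] → ℝⁿ continuous with ẋ(t) = Π(t)u(t) and x(0) = x₀. Then ∫₀ᵀ ( (1/2)⟨Π(t)∇f(x(t)), ∇f(x(t))⟩ + (1/2)⟨Π(t)u(t), u(t)⟩ ) dt + f(x(T)) = f(x₀) + (1/2)∫₀ᵀ ‖Π(t)(u(t) + ∇f(x(t)))‖² dt ≥ f(x₀), with equality whenever Π(t)u(t) = −Π(t)∇f(x(t)) for all t; in particular, the continuous-time stochastic-gradient-descent path ẋ*(t) = −Π(t)∇f(x*(t)), x*(0) = x₀ (with u* = −∇f(x*)), is optimal for this weighted control problem. -/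

import Mathlib

open MeasureTheory Real intervalIntegral RealInnerProductSpace

section aux
variable {E : Type*} [NormedAddCommGroup E] [InnerProductSpace ℝ E]

lemma key_algebra (Q : E →L[ℝ] E) (hs : ∀ v w, ⟪Q v, w⟫ = ⟪v, Q w⟫)
    (hi : Q.comp Q = Q) (a b : E) :
    (1 / 2) * ⟪Q a, a⟫ + (1 / 2) * ⟪Q b, b⟫ + ⟪a, Q b⟫
      = (1 / 2) * ‖Q (b + a)‖ ^ 2 := by
  have hQQ : ∀ c : E, Q (Q c) = Q c := fun c =>
    congrFun (congrArg DFunLike.coe hi) c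
  have h1 : ‖Q (b + a)‖ ^ 2 = ⟪Q (b + a), Q (b + a)⟫ := by
    rw [real_inner_self_eq_norm_sq]
  have h2 : ⟪Q (b + a), Q (b + a)⟫ = ⟪b + a, Q (b + a)⟫ := by
    rw [hs, hQQ]
  have h3 : ⟪b, Q a⟫ = ⟪a, Q b⟫ := by
    rw [← hs, real_inner_comm]
  have h4 : ⟪Q a, a⟫ = ⟪a, Q a⟫ := real_inner_comm _ _
  have h5 : ⟪Q b, b⟫ = ⟪b, Q b⟫ := real_inner_comm _ _
  rw [h1, h2]
  simp only [map_add, inner_add_left, inner_add_right]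
  rw [h3, h4, h5]; ring

end aux

/-- Let `f : ℝⁿ → ℝ` be `C¹`, `T > 0`, `x₀ ∈ ℝⁿ`, and let
`Π : [0,T] → ℝ^{n×n}` be continuous with each `Π t` a symmetric idempotent (an orthogonal
projection).  For every `C¹` path `x` with `ẋ t = Π t (u t)`, `x 0 = x₀` and `u` continuous:
`∫₀ᵀ ((1/2)⟪Π t ∇f(x t), ∇f(x t)⟫ + (1/2)⟪Π t (u t), u t⟫) dt + f (x T)
  = f x₀ + (1/2)∫₀ᵀ ‖Π t (u t + ∇f (x t))‖² dt ≥ f x₀`,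
with equality whenever `Π t (u t) = -Π t (∇f (x t))` for all `t`; in particular the
continuous-time stochastic-gradient-descent path `ẋ⋆ = -Π t ∇f(x⋆)` (i.e. `u⋆ = -∇f(x⋆)`)
is optimal for this weighted control problem. -/
theorem sgd_flow_optimal {n : ℕ}
    (f : EuclideanSpace ℝ (Fin n) → ℝ) (hf : ContDiff ℝ 1 f)
    (T : ℝ) (hT : 0 < T) (x₀ : EuclideanSpace ℝ (Fin n))
    (P : ℝ → (EuclideanSpace ℝ (Fin n) →L[ℝ] EuclideanSpace ℝ (Fin n)))
    (hPcont : ContinuousOn P (Set.Icc (0 : ℝ) T))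
    (hPsymm : ∀ t v w, ⟪P t v, w⟫ = ⟪v, P t w⟫)
    (hPidem : ∀ t, (P t).comp (P t) = P t)
    (x : ℝ → EuclideanSpace ℝ (Fin n)) (u : ℝ → EuclideanSpace ℝ (Fin n))
    (hu : ContinuousOn u (Set.Icc (0 : ℝ) T))
    (hx : ∀ t ∈ Set.Icc (0 : ℝ) T, HasDerivAt x (P t (u t)) t)
    (hx0 : x 0 = x₀) :
    (∫ t in (0 : ℝ)..T,
        ((1 / 2) * ⟪P t (gradient f (x t)), gradient f (x t)⟫
          + (1 / 2) * ⟪P t (u t), u t⟫)) + f (x T)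
        = f x₀ + (1 / 2) * ∫ t in (0 : ℝ)..T, ‖P t (u t + gradient f (x t))‖ ^ 2
      ∧ (∫ t in (0 : ℝ)..T,
          ((1 / 2) * ⟪P t (gradient f (x t)), gradient f (x t)⟫
            + (1 / 2) * ⟪P t (u t), u t⟫)) + f (x T) ≥ f x₀
      ∧ ((∀ t ∈ Set.Icc (0 : ℝ) T, P t (u t) = -(P t (gradient f (x t)))) →
          (∫ t in (0 : ℝ)..T,
            ((1 / 2) * ⟪P t (gradient f (x t)), gradient f (x t)⟫
              + (1 / 2) * ⟪P t (u t), u t⟫)) + f (x T) = f x₀) := by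
  set g : ℝ → EuclideanSpace ℝ (Fin n) := fun t => gradient f (x t) with hg
  have hIcc : Set.uIcc (0 : ℝ) T = Set.Icc 0 T := Set.uIcc_of_le hT.le
  -- continuity facts
  have hxcont : ContinuousOn x (Set.Icc (0 : ℝ) T) := fun t ht =>
    (hx t ht).continuousAt.continuousWithinAt
  have hgradcont : Continuous (fun y => gradient f y) := by
    have : Continuous (fun y => fderiv ℝ f y) := hf.continuous_fderiv one_ne_zero
    exact (InnerProductSpace.toDual ℝ _).symm.continuous.comp this
  have hgcont : ContinuousOn g (Set.Icc (0 : ℝ) T) :=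
    hgradcont.comp_continuousOn hxcont
  have hPu : ContinuousOn (fun t => P t (u t)) (Set.Icc (0 : ℝ) T) :=
    hPcont.clm_apply hu
  have hPg : ContinuousOn (fun t => P t (g t)) (Set.Icc (0 : ℝ) T) :=
    hPcont.clm_apply hgcont
  have hPug : ContinuousOn (fun t => P t (u t + g t)) (Set.Icc (0 : ℝ) T) :=
    hPcont.clm_apply (hu.add hgcont)
  -- derivative of f ∘ x
  have hfc : ∀ t ∈ Set.Icc (0 : ℝ) T,
      HasDerivAt (fun s => f (x s)) ⟪g t, P t (u t)⟫ t := by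
    intro t ht
    have hgr : HasGradientAt f (g t) (x t) :=
      (hf.differentiable one_ne_zero (x t)).hasGradientAt
    have := hgr.hasFDerivAt.comp_hasDerivAt t (hx t ht)
    simp [InnerProductSpace.toDual_apply_apply] at this; exact this
  -- integrability
  have hAcont : ContinuousOn (fun t =>
      (1 / 2) * ⟪P t (g t), g t⟫ + (1 / 2) * ⟪P t (u t), u t⟫) (Set.Icc (0 : ℝ) T) := by
    exact (continuousOn_const.mul (hPg.inner hgcont)).add
      (continuousOn_const.mul (hPu.inner hu))
  have hBcont : ContinuousOn (fun t => ⟪g t, P t (u t)⟫) (Set.Icc (0 : ℝ) T) :=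
    hgcont.inner hPu
  have hNcont : ContinuousOn (fun t => ‖P t (u t + g t)‖ ^ 2) (Set.Icc (0 : ℝ) T) :=
    (hPug.norm).pow 2
  have hAint : IntervalIntegrable (fun t =>
      (1 / 2) * ⟪P t (g t), g t⟫ + (1 / 2) * ⟪P t (u t), u t⟫) volume 0 T :=
    (hAcont.mono (by rw [hIcc])).intervalIntegrable
  have hBint : IntervalIntegrable (fun t => ⟪g t, P t (u t)⟫) volume 0 T :=
    (hBcont.mono (by rw [hIcc])).intervalIntegrable
  have hNint : IntervalIntegrable (fun t => ‖P t (u t + g t)‖ ^ 2) volume 0 T :=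
    (hNcont.mono (by rw [hIcc])).intervalIntegrable
  -- FTC
  have hFTC : ∫ t in (0 : ℝ)..T, ⟪g t, P t (u t)⟫ = f (x T) - f (x 0) :=
    integral_eq_sub_of_hasDerivAt (fun t ht => hfc t (hIcc ▸ ht)) hBint
  -- pointwise identity
  have hpt : ∀ t, (1 / 2) * ⟪P t (g t), g t⟫ + (1 / 2) * ⟪P t (u t), u t⟫
      + ⟪g t, P t (u t)⟫ = (1 / 2) * ‖P t (u t + g t)‖ ^ 2 := fun t =>
    key_algebra (P t) (hPsymm t) (hPidem t) (g t) (u t)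
  have hsum : (∫ t in (0 : ℝ)..T,
      ((1 / 2) * ⟪P t (g t), g t⟫ + (1 / 2) * ⟪P t (u t), u t⟫))
      + ∫ t in (0 : ℝ)..T, ⟪g t, P t (u t)⟫
      = (1 / 2) * ∫ t in (0 : ℝ)..T, ‖P t (u t + g t)‖ ^ 2 := by
    rw [← intervalIntegral.integral_add hAint hBint, ← intervalIntegral.integral_const_mul]
    exact intervalIntegral.integral_congr fun t _ => hpt t
  have hmain : (∫ t in (0 : ℝ)..T,
      ((1 / 2) * ⟪P t (g t), g t⟫ + (1 / 2) * ⟪P t (u t), u t⟫)) + f (x T)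
      = f x₀ + (1 / 2) * ∫ t in (0 : ℝ)..T, ‖P t (u t + g t)‖ ^ 2 := by
    rw [← hsum, hFTC, hx0]; ring
  have hnonneg : (0 : ℝ) ≤ ∫ t in (0 : ℝ)..T, ‖P t (u t + g t)‖ ^ 2 :=
    intervalIntegral.integral_nonneg hT.le (fun t _ => sq_nonneg _)
  refine ⟨hmain, by rw [hmain]; nlinarith, ?_⟩
  intro heq
  have hzero : ∫ t in (0 : ℝ)..T, ‖P t (u t + g t)‖ ^ 2 = 0 := by
    have h0 : ∫ t in (0 : ℝ)..T, ‖P t (u t + g t)‖ ^ 2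
        = ∫ t in (0 : ℝ)..T, (0 : ℝ) := by
      refine intervalIntegral.integral_congr fun t ht => ?_
      have ht' := hIcc ▸ ht
      have : P t (u t + g t) = 0 := by
        rw [map_add, heq t ht']; simp [hg]
      simp [this]
    rw [h0]; simp
  rw [hmain, hzero]; ring
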